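/- arXiv:2312.14655 — 4 statements merged into one kernel-verified Lean document; each statement's English description precedes it below -/
import Mathlib

section
/- If q is a non-constant polynomial over ℂ, then every root of its derivative q' lies in the convex hull of the set of roots of q. -/
open MeasureTheory Metric Filter Polynomial Topology Asymptotics
open scoped Classical ENNReal

/-- Logarithmic potential of a measure, `p_μ(z) = ∫ log|z-w| dμ(w)`. -/
noncomputable def logPotential (μ : Measure ℂ) (z : ℂ) : ℝ :=
  ∫ w, Real.log (‖z - w‖) ∂μ

/-- Logarithmic energy `I(μ) = ∫ p_μ dμ`. -/
noncomputable def logEnergy (μ : Measure ℂ) : ℝ :=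
  ∫ z, logPotential μ z ∂μ

/-- A compact set is non-polar if it carries a probability measure of finite logarithmic
energy (equivalently, positive logarithmic capacity). -/
def NonPolar (K : Set ℂ) : Prop :=
  ∃ μ : Measure ℂ, IsProbabilityMeasure μ ∧ μ Kᶜ = 0 ∧
    Integrable (fun p : ℂ × ℂ => Real.log (‖p.1 - p.2‖)) (μ.prod μ)

/-- `ω` is the equilibrium measure of `K`: a probability measure supported on `K`,
of finite energy, maximizing the logarithmic energy (Ransford's sign convention). -/
structure IsEquilibriumMeasure (K : Set ℂ) (ω : Measure ℂ) : Prop where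
  prob : IsProbabilityMeasure ω
  supp : ω Kᶜ = 0
  finite_energy :
    Integrable (fun p : ℂ × ℂ => Real.log (‖p.1 - p.2‖)) (ω.prod ω)
  maximal : ∀ ν : Measure ℂ, IsProbabilityMeasure ν → ν Kᶜ = 0 →
    Integrable (fun p : ℂ × ℂ => Real.log (‖p.1 - p.2‖)) (ν.prod ν) →
    logEnergy ν ≤ logEnergy ω

/-- Green's function of `Ω = ℂ \ K` with pole at infinity, `g_Ω = p_ω − I(ω)`,
where `ω` is the equilibrium measure of `K`. -/
noncomputable def greenFn (ω : Measure ℂ) (z : ℂ) : ℝ :=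
  logPotential ω z - logEnergy ω

/-- Root distribution of a polynomial: average of Dirac masses at its roots
with multiplicity. -/
noncomputable def rootDist (q : Polynomial ℂ) : Measure ℂ :=
  ((q.natDegree : ℝ≥0∞))⁻¹ • (q.roots.map Measure.dirac).sum

/-- `K`-regularity of a sequence of polynomials: `(1/n_k) log|q_k| → g`
uniformly outside some disk. -/
def KRegular (q : ℕ → Polynomial ℂ) (g : ℂ → ℝ) : Prop :=
  ∃ R > (0:ℝ), TendstoUniformlyOn
    (fun k z => ((q k).natDegree : ℝ)⁻¹ * Real.log (‖(q k).eval z‖))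
    g atTop (closedBall (0:ℂ) R)ᶜ

/-- The sequence `(q_k)` centers on the compact set `C`. -/
def Centers (q : ℕ → Polynomial ℂ) (C : Set ℂ) : Prop :=
  ∃ N : ℕ,
    (∃ R > (0:ℝ), ∀ k ≥ N, ∀ z : ℂ, (q k).IsRoot z → z ∈ ball (0:ℂ) R) ∧
    (∀ L : Set ℂ, IsClosed L → Disjoint L C →
      ∃ M : ℕ, 0 < M ∧ ∀ k ≥ N, (((q k).roots).filter (· ∈ L)).card ≤ M)

/-- The sequence `(q_k)` weakly centers on the compact set `C`. -/
def WeaklyCenters (q : ℕ → Polynomial ℂ) (C : Set ℂ) : Prop :=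
  (∃ N : ℕ, ∃ R > (0:ℝ), ∀ k ≥ N, ∀ z : ℂ, (q k).IsRoot z → z ∈ ball (0:ℂ) R) ∧
  (∀ L : Set ℂ, IsClosed L → Disjoint L C →
    Tendsto (fun k => rootDist (q k) L) atTop (nhds 0))

/-- Weak-star convergence of measures, tested against bounded continuous functions. -/
def WeakStarTendsto (μ : ℕ → Measure ℂ) (ν : Measure ℂ) : Prop :=
  ∀ f : BoundedContinuousFunction ℂ ℝ,
    Tendsto (fun k => ∫ z, f z ∂(μ k)) atTop (nhds (∫ z, f z ∂ν))

/-- Gauss–Lucas: every root of `q'` lies in the convex hull of the roots of `q`. -/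

lemma logderiv (z : ℂ) : ∀ (t : Multiset ℂ), (∀ r ∈ t, z ≠ r) →
    eval z (derivative ((t.map (fun r => X - C r)).prod)) =
      eval z ((t.map (fun r => X - C r)).prod) * (t.map (fun r => (z - r)⁻¹)).sum := by
  intro t
  induction t using Multiset.induction with
  | empty => simp
  | cons r s ih =>
    intro h
    have hzr : z - r ≠ 0 := sub_ne_zero.2 (h r (Multiset.mem_cons_self r s))
    have ih' := ih (fun w hw => h w (Multiset.mem_cons_of_mem hw))
    simp only [Multiset.map_cons, Multiset.prod_cons, Multiset.sum_cons, derivative_mul,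
      derivative_sub, derivative_X, derivative_C, sub_zero, one_mul, eval_add, eval_mul,
      eval_sub, eval_X, eval_C, ih']
    field_simp

theorem gl_aux_main (q : Polynomial ℂ) (hq : 1 ≤ q.degree) (z : ℂ)
    (hz : (Polynomial.derivative q).IsRoot z) :
    z ∈ convexHull ℝ {w : ℂ | q.IsRoot w} := by
  have hq0 : q ≠ 0 := fun h => by simp [h] at hq
  by_cases hzr : q.IsRoot z
  · exact subset_convexHull ℝ _ hzr
  -- z is not a root of q
  have hne : ∀ r ∈ q.roots, z ≠ r := by
    intro r hr he
    exact hzr (he ▸ (isRoot_of_mem_roots hr))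
  have hsplit : Splits q := IsAlgClosed.splits q
  have hfact := hsplit.eq_prod_roots
  have hlc : q.leadingCoeff ≠ 0 := leadingCoeff_ne_zero.2 hq0
  have hPz : eval z ((q.roots.map (fun r => X - C r)).prod) ≠ 0 := by
    intro h
    apply hzr
    rw [IsRoot, hfact]
    simp [h]
  -- sum of reciprocals is zero
  have hsum : (q.roots.map (fun r => (z - r)⁻¹)).sum = 0 := by
    have hd : eval z (derivative q) = 0 := hz
    rw [hfact, derivative_C_mul] at hd
    rw [eval_mul, eval_C, logderiv z q.roots hne] at hd
    rcases mul_eq_zero.1 hd with h | h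
    · exact absurd h hlc
    rcases mul_eq_zero.1 h with h | h
    · exact absurd h hPz
    · exact h
  -- conjugate
  have hsum2 : (q.roots.map (fun r => ((Complex.normSq (z - r))⁻¹ : ℂ) * (z - r))).sum = 0 := by
    have := congrArg (starRingEnd ℂ) hsum
    rw [map_multiset_sum, Multiset.map_map, map_zero] at this
    rw [← this]
    congr 1
    apply Multiset.map_congr rfl
    intro r _
    have : (starRingEnd ℂ) ((z - r)⁻¹) = ((Complex.normSq (z - r))⁻¹ : ℝ) * (z - r) := by
      rw [map_inv₀, Complex.inv_def, Complex.conj_conj, Complex.normSq_conj]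
      push_cast
      ring
    rw [Function.comp_apply, this, Complex.ofReal_inv]
  -- set up weights
  set s := q.roots.toFinset with hs
  set W : ℂ → ℝ := fun r => (q.roots.count r : ℝ) * (Complex.normSq (z - r))⁻¹ with hW
  have hW0 : ∀ r ∈ s, 0 ≤ W r := fun r _ =>
    mul_nonneg (Nat.cast_nonneg _) (inv_nonneg.2 (Complex.normSq_nonneg _))
  have hcard : 0 < Multiset.card q.roots := by
    rw [splits_iff_card_roots.1 hsplit]
    exact natDegree_pos_iff_degree_pos.2 (lt_of_lt_of_le zero_lt_one hq)
  obtain ⟨r0, hr0⟩ := Multiset.card_pos_iff_exists_mem.1 hcard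
  have hWpos : 0 < ∑ r ∈ s, W r := by
    refine Finset.sum_pos' hW0 ⟨r0, Multiset.mem_toFinset.2 hr0, ?_⟩
    apply mul_pos
    · exact_mod_cast (Multiset.count_pos.2 hr0)
    · exact inv_pos.2 (Complex.normSq_pos.2 (sub_ne_zero.2 (hne r0 hr0)))
  have hkey : ∑ r ∈ s, (W r : ℂ) * (z - r) = 0 := by
    rw [Finset.sum_multiset_map_count q.roots
      (fun r => ((Complex.normSq (z - r))⁻¹ : ℂ) * (z - r))] at hsum2
    rw [← hsum2]
    apply Finset.sum_congr rfl
    intro r _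
    rw [nsmul_eq_mul, hW]
    push_cast
    ring
  have hcm : z = s.centerMass W id := by
    have h1 : (∑ r ∈ s, W r : ℝ) • z = ∑ r ∈ s, W r • (id r) := by
      have h2 : ∑ r ∈ s, (W r : ℂ) * z = ∑ r ∈ s, (W r : ℂ) * r := by
        have h3 : ∑ r ∈ s, ((W r : ℂ) * z - (W r : ℂ) * r) = 0 := by
          rw [← hkey]
          apply Finset.sum_congr rfl
          intro r _
          ring
        rw [Finset.sum_sub_distrib] at h3
        exact sub_eq_zero.1 h3
      calc (∑ r ∈ s, W r : ℝ) • z = ∑ r ∈ s, (W r : ℂ) * z := by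
            rw [Complex.real_smul, Complex.ofReal_sum, Finset.sum_mul]
        _ = ∑ r ∈ s, (W r : ℂ) * r := h2
        _ = ∑ r ∈ s, W r • (id r) := by
            apply Finset.sum_congr rfl
            intro r _
            rw [Complex.real_smul, id]
    rw [Finset.centerMass, ← h1, smul_smul, inv_mul_cancel₀ hWpos.ne', one_smul]
  rw [hcm]
  exact Finset.centerMass_mem_convexHull s hW0 hWpos
    (fun r hr => isRoot_of_mem_roots (Multiset.mem_toFinset.1 hr))

/-- main -/
theorem stmt_0 (q : Polynomial ℂ) (hq : 1 ≤ q.degree) (z : ℂ)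
    (hz : (Polynomial.derivative q).IsRoot z) :
    z ∈ convexHull ℝ {w : ℂ | q.IsRoot w} := by
  exact gl_aux_main q hq z hz
end

section
/- Let P be a polynomial of degree n > 1 with Julia set J(P) and equilibrium measure ω on its filled Julia set. If L ⊆ J(P) is compact with P(L) = L, then either L = J(P) or ω(L) = 0. -/
open MeasureTheory Metric Filter Polynomial Topology Asymptotics
open scoped Classical ENNReal

/-- The filled Julia set of a polynomial: points with bounded forward orbit. -/
def filledJulia (P : Polynomial ℂ) : Set ℂ :=
  {z : ℂ | Bornology.IsBounded (Set.range fun k : ℕ => (fun w => P.eval w)^[k] z)}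

theorem stmt_8 (P : Polynomial ℂ) (hP : 1 < P.natDegree)
    (ω : Measure ℂ) [IsProbabilityMeasure ω]
    (hsupp0 : ω (frontier (filledJulia P))ᶜ = 0)
    (hsupp : ∀ z ∈ frontier (filledJulia P), ∀ r > (0:ℝ), 0 < ω (ball z r))
    (hinv : ∀ U : Set ℂ, MeasurableSet U → ω ((fun w => P.eval w) ⁻¹' U) = ω U)
    (herg : ∀ U : Set ℂ, MeasurableSet U →
      (fun w => P.eval w) ⁻¹' U = U → ω U = 0 ∨ ω U = 1)
    (L : Set ℂ) (hL : IsCompact L) (hLJ : L ⊆ frontier (filledJulia P))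
    (hPL : (fun w => P.eval w) '' L = L) :
    L = frontier (filledJulia P) ∨ ω L = 0 := by
  classical
  set f : ℂ → ℂ := fun w => P.eval w with hf
  have hfc : Continuous f := P.continuous_aeval
  have hfm : Measurable f := hfc.measurable
  have hmL : MeasurableSet L := hL.isClosed.measurableSet
  -- L ⊆ f ⁻¹' L
  have hsub : L ⊆ f ⁻¹' L := by
    intro x hx
    have : f x ∈ f '' L := Set.mem_image_of_mem f hx
    rw [hPL] at this
    exact this
  set A : ℕ → Set ℂ := fun n => (f^[n]) ⁻¹' L with hA
  have hAm : ∀ n, MeasurableSet (A n) := fun n => (hfm.iterate n) hmL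
  have hmono : Monotone A := by
    apply monotone_nat_of_le_succ
    intro n x hx
    have : f^[n+1] x = f (f^[n] x) := Function.iterate_succ_apply' f n x
    simp only [A, Set.mem_preimage] at hx ⊢
    rw [this]
    exact hsub hx
  have hmeasA : ∀ n, ω (A n) = ω L := by
    intro n
    induction n with
    | zero => simp [A]
    | succ n ih =>
      have h1 : A (n+1) = f ⁻¹' (A n) := by
        ext x
        simp [A, Set.mem_preimage, Function.iterate_succ_apply]
      rw [h1, hinv _ (hAm n), ih]
  set U : Set ℂ := ⋃ n, A n with hU
  have hUm : MeasurableSet U := MeasurableSet.iUnion hAm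
  have hUinv : f ⁻¹' U = U := by
    apply Set.Subset.antisymm
    · intro x hx
      simp only [U, Set.mem_preimage, Set.mem_iUnion] at hx ⊢
      obtain ⟨n, hn⟩ := hx
      exact ⟨n+1, by simpa [A, Function.iterate_succ_apply] using hn⟩
    · intro x hx
      simp only [U, Set.mem_preimage, Set.mem_iUnion] at hx ⊢
      obtain ⟨n, hn⟩ := hx
      refine ⟨n, ?_⟩
      have := hmono (Nat.le_succ n) hn
      simpa [A, Function.iterate_succ_apply] using this
  have hUmeas : ω U = ω L := by
    have := Directed.measure_iUnion (μ := ω) hmono.directed_le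
    rw [hU, this]
    simp [hmeasA]
  rcases herg U hUm hUinv with h0 | h1
  · right
    rw [← hUmeas, h0]
  · left
    have hLc : ω Lᶜ = 0 := by
      have : ω L = 1 := by rw [← hUmeas, h1]
      rw [measure_compl hmL (measure_ne_top ω L), this, measure_univ]
      simp
    apply Set.Subset.antisymm hLJ
    by_contra hns
    obtain ⟨z, hzJ, hzL⟩ := Set.not_subset.mp hns
    obtain ⟨r, hr, hball⟩ := Metric.isOpen_iff.mp hL.isClosed.isOpen_compl z hzL
    have : ω (ball z r) ≤ ω Lᶜ := measure_mono hball
    rw [hLc] at this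
    exact absurd (le_antisymm this zero_le) (ne_of_gt (hsupp z hzJ r hr))
end

section
/- Suppose (q_k) is a sequence of polynomials with degrees n_k → ∞, whose roots are uniformly contained in a disk D(0,R), and whose root distributions μ_k converge weak-star to a probability measure μ supported in the closed disk. If additionally (1/n_k) log|q_k(z)| converges for |z| > R to g(z) = p_ω(z) − I(ω) (the Green's function of ℂ \ K), where ω is the equilibrium measure of a compact non-polar set K ⊂ D(0,R), then (1/n_k) log|γ_k| → −I(ω), where γ_k is the leading coefficient of q_k, and p_μ = p_ω on {|z| > R}. -/
open MeasureTheory Metric Filter Polynomial Topology Asymptotics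
open scoped Classical ENNReal

lemma multiset_dirac_sum_finite (s : Multiset ℂ) :
    IsFiniteMeasure ((s.map Measure.dirac).sum) := by
  induction s using Multiset.induction with
  | empty => simp; infer_instance
  | cons a s ih =>
    rw [Multiset.map_cons, Multiset.sum_cons]
    haveI := ih
    infer_instance

lemma integral_multiset_dirac_sum (f : BoundedContinuousFunction ℂ ℝ) (s : Multiset ℂ) :
    ∫ z, f z ∂((s.map Measure.dirac).sum) = (s.map (fun z => f z)).sum := by
  induction s using Multiset.induction with
  | empty => simp
  | cons a s ih =>
    rw [Multiset.map_cons, Multiset.sum_cons, Multiset.map_cons, Multiset.sum_cons]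
    haveI := multiset_dirac_sum_finite s
    rw [integral_add_measure (f.integrable _) (f.integrable _), integral_dirac, ih]

lemma integral_rootDist (f : BoundedContinuousFunction ℂ ℝ) (q : Polynomial ℂ) :
    ∫ z, f z ∂(rootDist q) =
      ((q.natDegree : ℝ))⁻¹ * ((q.roots.map (fun r => f r)).sum) := by
  rw [rootDist, integral_smul_measure, integral_multiset_dirac_sum]
  simp [ENNReal.toReal_inv, smul_eq_mul]



lemma log_multiset_prod (t : Multiset ℝ) (h : ∀ x ∈ t, x ≠ 0) :
    Real.log t.prod = (t.map Real.log).sum := by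
  induction t using Multiset.induction with
  | empty => simp
  | cons a s ih =>
    rw [Multiset.prod_cons, Multiset.map_cons, Multiset.sum_cons,
      Real.log_mul (h a (Multiset.mem_cons_self a s))
        (Multiset.prod_ne_zero (fun h0 => h 0 (Multiset.mem_cons_of_mem h0) rfl)),
      ih (fun x hx => h x (Multiset.mem_cons_of_mem hx))]

lemma log_abs_eval (q : Polynomial ℂ) (hq : q ≠ 0) (z : ℂ) (hz : ¬ q.IsRoot z) :
    Real.log (‖q.eval z‖) =
      Real.log (‖q.leadingCoeff‖)
        + (q.roots.map (fun r => Real.log (‖z - r‖))).sum := by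
  have hsplit : q.Splits := IsAlgClosed.splits q
  have hmem : ∀ r ∈ q.roots, z - r ≠ 0 := by
    intro r hr h0
    have : z = r := sub_eq_zero.mp h0
    subst this
    exact hz ((Polynomial.mem_roots hq).mp hr)
  have hev : q.eval z = q.leadingCoeff * ((q.roots.map (fun r => z - r)).prod) := by
    conv_lhs => rw [hsplit.eq_prod_roots]
    rw [Polynomial.eval_mul, Polynomial.eval_C, Polynomial.eval_multiset_prod]
    simp [Multiset.map_map, Function.comp]
  rw [hev, norm_mul, Real.log_mul, (show ∀ s : Multiset ℂ, ‖s.prod‖ = (s.map (‖·‖)).prod from fun s => map_multiset_prod (normHom : ℂ →*₀ ℝ) s), Multiset.map_map,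
    log_multiset_prod, Multiset.map_map]
  · simp [Function.comp]
  · intro x hx
    simp only [Multiset.mem_map, Function.comp] at hx
    obtain ⟨r, hr, rfl⟩ := hx
    exact norm_ne_zero_iff.mpr (hmem r hr)
  · exact norm_ne_zero_iff.mpr (Polynomial.leadingCoeff_ne_zero.mpr hq)
  · rw [(show ∀ s : Multiset ℂ, ‖s.prod‖ = (s.map (‖·‖)).prod from fun s => map_multiset_prod (normHom : ℂ →*₀ ℝ) s)]
    apply Multiset.prod_ne_zero
    intro h0
    simp only [Multiset.mem_map, Multiset.map_map, Function.comp] at h0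
    obtain ⟨r, hr, hx2⟩ := h0
    exact hmem r hr (norm_eq_zero.mp hx2)

lemma exists_bcf (R : ℝ) (hR : 0 < R) (z : ℂ) (hz : R < ‖z‖) :
    ∃ f : BoundedContinuousFunction ℂ ℝ,
      ∀ w ∈ closedBall (0:ℂ) R, f w = Real.log (‖z - w‖) := by
  set ε := ‖z‖ - R with hε
  set M := ‖z‖ + R with hM
  have hε0 : 0 < ε := by simp [hε]; linarith
  have hM0 : 0 < M := by positivity
  have hεM : ε ≤ M := by simp [hε, hM]; linarith
  have hcont : Continuous (fun w : ℂ => Real.log (min (max (‖z - w‖) ε) M)) := by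
    apply Real.continuousOn_log.comp_continuous
    · exact (((continuous_norm.comp (continuous_const.sub continuous_id)).max
        continuous_const).min continuous_const)
    · intro w
      have : 0 < min (max (‖z - w‖) ε) M :=
        lt_min (lt_of_lt_of_le hε0 (le_max_right _ _)) hM0
      exact ne_of_gt this
  refine ⟨BoundedContinuousFunction.ofNormedAddCommGroup _ hcont
    (|Real.log ε| + |Real.log M|) ?_, ?_⟩
  · intro w
    have h1 : ε ≤ min (max (‖z - w‖) ε) M :=
      le_min (le_trans (le_max_right _ _) (le_refl _)) hεM
    have h2 : min (max (‖z - w‖) ε) M ≤ M := min_le_right _ _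
    have hl : Real.log ε ≤ Real.log (min (max (‖z - w‖) ε) M) :=
      Real.log_le_log hε0 h1
    have hu : Real.log (min (max (‖z - w‖) ε) M) ≤ Real.log M :=
      Real.log_le_log (lt_of_lt_of_le hε0 h1) h2
    rw [Real.norm_eq_abs]
    rw [abs_le]
    constructor
    · calc -(|Real.log ε| + |Real.log M|) ≤ -|Real.log ε| := by
            have := abs_nonneg (Real.log M); linarith
        _ ≤ Real.log ε := neg_abs_le _
        _ ≤ _ := hl
    · calc Real.log (min (max (‖z - w‖) ε) M) ≤ Real.log M := hu
        _ ≤ |Real.log M| := le_abs_self _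
        _ ≤ |Real.log ε| + |Real.log M| := by have := abs_nonneg (Real.log ε); linarith
  · intro w hw
    have hwR : ‖w‖ ≤ R := by
      simpa [Complex.dist_eq] using mem_closedBall_zero_iff.mp hw
    have hlow : ε ≤ ‖z - w‖ := by
      have h := norm_sub_norm_le z w
      simp only [hε]
      linarith
    have hup : ‖z - w‖ ≤ M := by
      calc ‖z - w‖ ≤ ‖z‖ + ‖w‖ := norm_sub_le z w
        _ ≤ M := by simp [hM]; linarith
    show Real.log (min (max (‖z - w‖) ε) M) = _
    rw [max_eq_left hlow, min_eq_left hup]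

lemma ae_mem_closedBall {R : ℝ} (ν : Measure ℂ) (hν : ν (closedBall (0:ℂ) R)ᶜ = 0) :
    ∀ᵐ w ∂ν, w ∈ closedBall (0:ℂ) R := by
  have h : {a : ℂ | ¬ a ∈ closedBall (0:ℂ) R} = (closedBall (0:ℂ) R)ᶜ := rfl
  rw [ae_iff, h]
  exact hν

lemma integral_bcf_eq_logPotential {R : ℝ} (ν : Measure ℂ)
    (hν : ν (closedBall (0:ℂ) R)ᶜ = 0) (z : ℂ) (f : BoundedContinuousFunction ℂ ℝ)
    (hf : ∀ w ∈ closedBall (0:ℂ) R, f w = Real.log (‖z - w‖)) :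
    ∫ w, f w ∂ν = logPotential ν z := by
  apply integral_congr_ae
  filter_upwards [ae_mem_closedBall ν hν] with w hw
  exact hf w hw

lemma log_abs_meas (ν : Measure ℂ) (x : ℂ) :
    AEStronglyMeasurable (fun w : ℂ => Real.log (‖x - w‖)) ν := by
  exact (Real.measurable_log.comp (continuous_norm.measurable.comp
    (measurable_const.sub measurable_id))).aestronglyMeasurable

lemma farfield (R : ℝ) (hR : 0 < R) (ν : Measure ℂ) [IsProbabilityMeasure ν]
    (hν : ν (closedBall (0:ℂ) R)ᶜ = 0) :
    Tendsto (fun m : ℕ => logPotential ν ((2*R + 1 + m : ℝ) : ℂ) - Real.log (2*R + 1 + m))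
      atTop (nhds 0) := by
  set x : ℕ → ℝ := fun m => 2*R + 1 + m with hx
  have hxpos : ∀ m, 0 < x m := by intro m; simp [hx]; positivity
  have hxR : ∀ m, R + 1 + m ≤ x m - R := by intro m; simp only [hx]; linarith
  have hxgtR : ∀ m, R < x m := by intro m; have := hxR m; nlinarith [Nat.cast_nonneg (α := ℝ) m]
  -- integrability of the integrand
  have hint : ∀ m, Integrable (fun w : ℂ => Real.log (‖(x m : ℂ) - w‖)) ν := by
    intro m
    apply Integrable.mono' (integrable_const (|Real.log (x m - R)| + |Real.log (x m + R)|))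
      (log_abs_meas ν _)
    filter_upwards [ae_mem_closedBall ν hν] with w hw
    have hwR : ‖w‖ ≤ R := by
      simpa using mem_closedBall_zero_iff.mp hw
    have h1 : x m - R ≤ ‖(x m : ℂ) - w‖ := by
      have h := norm_sub_norm_le ((x m : ℂ)) w
      simp only [Complex.norm_real, Real.norm_eq_abs] at h
      rw [abs_of_pos (hxpos m)] at h
      linarith
    have h2 : ‖(x m : ℂ) - w‖ ≤ x m + R := by
      have h := norm_sub_le ((x m : ℂ)) w
      simp only [Complex.norm_real, Real.norm_eq_abs] at h
      rw [abs_of_pos (hxpos m)] at h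
      linarith
    have hpos : (0:ℝ) < x m - R := by linarith [hxgtR m]
    have hl := Real.log_le_log hpos h1
    have hu := Real.log_le_log (lt_of_lt_of_le hpos h1) h2
    rw [Real.norm_eq_abs, abs_le]
    constructor
    · have := abs_nonneg (Real.log (x m + R)); have := neg_abs_le (Real.log (x m - R)); linarith
    · have := abs_nonneg (Real.log (x m - R)); have := le_abs_self (Real.log (x m + R)); linarith
  -- rewrite difference as an integral
  have heq : ∀ m, logPotential ν ((x m : ℝ) : ℂ) - Real.log (x m)
      = ∫ w, (Real.log (‖(x m : ℂ) - w‖) - Real.log (x m)) ∂ν := by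
    intro m
    rw [integral_sub (hint m) (integrable_const _), integral_const]
    simp [logPotential]
  -- dominated convergence
  have hdct : Tendsto (fun m => ∫ w, (Real.log (‖(x m : ℂ) - w‖) - Real.log (x m)) ∂ν)
      atTop (nhds 0) := by
    have h0 : (0:ℝ) = ∫ (_ : ℂ), (0:ℝ) ∂ν := by simp
    rw [h0]
    apply tendsto_integral_of_dominated_convergence (fun _ => Real.log 2)
    · intro m
      exact ((log_abs_meas ν _).sub aestronglyMeasurable_const)
    · exact integrable_const _
    · intro m
      filter_upwards [ae_mem_closedBall ν hν] with w hw
      have hwR : ‖w‖ ≤ R := by simpa using mem_closedBall_zero_iff.mp hw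
      have h1 : x m - R ≤ ‖(x m : ℂ) - w‖ := by
        have h := norm_sub_norm_le ((x m : ℂ)) w
        simp only [Complex.norm_real, Real.norm_eq_abs] at h
        rw [abs_of_pos (hxpos m)] at h; linarith
      have h2 : ‖(x m : ℂ) - w‖ ≤ x m + R := by
        have h := norm_sub_le ((x m : ℂ)) w
        simp only [Complex.norm_real, Real.norm_eq_abs] at h
        rw [abs_of_pos (hxpos m)] at h; linarith
      have hpos : (0:ℝ) < x m - R := by linarith [hxgtR m]
      have habs : ‖(x m : ℂ) - w‖ ≠ 0 := ne_of_gt (lt_of_lt_of_le hpos h1)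
      rw [Real.norm_eq_abs, ← Real.log_div habs (ne_of_gt (hxpos m)), abs_le]
      have hrl : (1:ℝ)/2 ≤ ‖(x m : ℂ) - w‖ / x m := by
        rw [le_div_iff₀ (hxpos m)]
        have hhalf : (1:ℝ)/2 * x m ≤ x m - R := by
          simp only [hx]
          have := Nat.cast_nonneg (α := ℝ) m
          nlinarith
        exact le_trans hhalf h1
      have hru : ‖(x m : ℂ) - w‖ / x m ≤ 2 := by
        rw [div_le_iff₀ (hxpos m)]
        have : x m + R ≤ 2 * x m := by simp [hx]; nlinarith [Nat.cast_nonneg (α := ℝ) m]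
        linarith
      constructor
      · have : Real.log (1/2) ≤ Real.log (‖(x m : ℂ) - w‖ / x m) :=
          Real.log_le_log (by norm_num) hrl
        rw [Real.log_div one_ne_zero (by norm_num), Real.log_one] at this
        linarith
      · exact (Real.log_le_log (lt_of_lt_of_le (by norm_num) hrl) hru).trans_eq rfl
    · filter_upwards [ae_mem_closedBall ν hν] with w hw
      have hwR : ‖w‖ ≤ R := by simpa using mem_closedBall_zero_iff.mp hw
      -- pointwise limit
      have hxtop : Tendsto x atTop atTop := by
        apply tendsto_atTop_add_const_left
        exact tendsto_natCast_atTop_atTop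
      have hRdiv : Tendsto (fun m => R / x m) atTop (nhds 0) :=
        Tendsto.div_atTop tendsto_const_nhds hxtop
      have hr : Tendsto (fun m => ‖(x m : ℂ) - w‖ / x m) atTop (nhds 1) := by
        apply tendsto_of_tendsto_of_tendsto_of_le_of_le
          (g := fun m => 1 - R / x m) (h := fun m => 1 + R / x m)
        · simpa using (tendsto_const_nhds (x := (1:ℝ))).sub hRdiv
        · simpa using (tendsto_const_nhds (x := (1:ℝ))).add hRdiv
        · intro m
          have h1 : x m - R ≤ ‖(x m : ℂ) - w‖ := by
            have h := norm_sub_norm_le ((x m : ℂ)) w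
            simp only [Complex.norm_real, Real.norm_eq_abs] at h
            rw [abs_of_pos (hxpos m)] at h; linarith
          have hmul : (1 - R / x m) * x m = x m - R := by have := (hxpos m).ne'; field_simp
          rw [le_div_iff₀ (hxpos m)]
          exact hmul.trans_le h1
        · intro m
          have h2 : ‖(x m : ℂ) - w‖ ≤ x m + R := by
            have h := norm_sub_le ((x m : ℂ)) w
            simp only [Complex.norm_real, Real.norm_eq_abs] at h
            rw [abs_of_pos (hxpos m)] at h; linarith
          rw [div_le_iff₀ (hxpos m)]
          have : (1 + R / x m) * x m = x m + R := by have := (hxpos m).ne'; field_simp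
          linarith [this ▸ h2]
      have hlog : Tendsto (fun m => Real.log (‖(x m : ℂ) - w‖ / x m)) atTop
          (nhds 0) := by
        have := (Real.continuousAt_log one_ne_zero).tendsto.comp hr
        simpa [Function.comp_def] using this
      apply hlog.congr
      intro m
      have hpos : (0:ℝ) < x m - R := by linarith [hxgtR m]
      have h1 : x m - R ≤ ‖(x m : ℂ) - w‖ := by
        have h := norm_sub_norm_le ((x m : ℂ)) w
        simp only [Complex.norm_real, Real.norm_eq_abs] at h
        rw [abs_of_pos (hxpos m)] at h; linarith
      rw [Real.log_div (ne_of_gt (lt_of_lt_of_le hpos h1)) (ne_of_gt (hxpos m))]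
  exact hdct.congr (fun m => (heq m).symm)


theorem stmt_11 (q : ℕ → Polynomial ℂ)
    (hdeg : Tendsto (fun k => (q k).natDegree) atTop atTop)
    (R : ℝ) (hR : 0 < R)
    (hroots : ∀ k, ∀ z : ℂ, (q k).IsRoot z → z ∈ ball (0:ℂ) R)
    (μ : Measure ℂ) [IsProbabilityMeasure μ]
    (hμsupp : μ (closedBall (0:ℂ) R)ᶜ = 0)
    (hws : WeakStarTendsto (fun k => rootDist (q k)) μ)
    (K : Set ℂ) (hK : IsCompact K) (hnp : NonPolar K) (hKR : K ⊆ ball (0:ℂ) R)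
    (ω : Measure ℂ) (hω : IsEquilibriumMeasure K ω)
    (hconv : ∀ z : ℂ, R < ‖z‖ →
      Tendsto (fun k => ((q k).natDegree : ℝ)⁻¹
          * Real.log (‖(q k).eval z‖))
        atTop (nhds (greenFn ω z))) :
    Tendsto (fun k => ((q k).natDegree : ℝ)⁻¹
        * Real.log (‖(q k).leadingCoeff‖))
      atTop (nhds (-(logEnergy ω))) ∧
    ∀ z : ℂ, R < ‖z‖ → logPotential μ z = logPotential ω z := by
  haveI := hω.prob
  set a : ℕ → ℝ := fun k => ((q k).natDegree : ℝ)⁻¹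
      * Real.log (‖(q k).leadingCoeff‖) with ha
  have hωsupp : ω (closedBall (0:ℂ) R)ᶜ = 0 :=
    measure_mono_null (Set.compl_subset_compl.mpr (hKR.trans ball_subset_closedBall)) hω.supp
  have hA : ∀ z : ℂ, R < ‖z‖ →
      Tendsto a atTop (nhds (greenFn ω z - logPotential μ z)) := by
    intro z hz
    obtain ⟨f, hf⟩ := exists_bcf R hR z hz
    have h1 := hws f
    rw [integral_bcf_eq_logPotential μ hμsupp z f hf] at h1
    have h3 := (hconv z hz).sub h1
    apply h3.congr'
    filter_upwards [hdeg.eventually_ge_atTop 1] with k hk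
    have hq0 : q k ≠ 0 := by
      intro h; rw [h] at hk; simp at hk
    have hzroot : ¬ (q k).IsRoot z := by
      intro h
      have h2 := hroots k z h
      rw [mem_ball_zero_iff] at h2
      linarith
    have hlog := log_abs_eval (q k) hq0 z hzroot
    have hint : ∫ w, f w ∂(rootDist (q k)) = ((q k).natDegree : ℝ)⁻¹ *
        (((q k).roots.map (fun r => Real.log (‖z - r‖))).sum) := by
      rw [integral_rootDist]
      congr 1
      apply congrArg Multiset.sum
      apply Multiset.map_congr rfl
      intro r hr
      exact hf r (ball_subset_closedBall (hroots k r ((Polynomial.mem_roots hq0).mp hr)))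
    rw [hint, hlog]
    simp only [ha]
    ring
  have hfar := (farfield R hR ω hωsupp).sub (farfield R hR μ hμsupp)
  have hc : Tendsto (fun m : ℕ => greenFn ω ((2*R+1+m : ℝ) : ℂ)
      - logPotential μ ((2*R+1+m : ℝ) : ℂ)) atTop (nhds (-(logEnergy ω))) := by
    have h := hfar.sub_const (logEnergy ω)
    norm_num at h
    apply h.congr
    intro m
    simp only [greenFn]
    push_cast
    ring
  have habs : ∀ m : ℕ, R < ‖((2*R+1+m : ℝ) : ℂ)‖ := by
    intro m
    rw [Complex.norm_real, Real.norm_eq_abs, abs_of_pos (by positivity)]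
    have := Nat.cast_nonneg (α := ℝ) m; linarith
  set c := greenFn ω ((2*R+1+(0:ℕ) : ℝ) : ℂ) - logPotential μ ((2*R+1+(0:ℕ) : ℝ) : ℂ)
    with hcdef
  have hac : Tendsto a atTop (nhds c) := hA _ (habs 0)
  have hconst : ∀ z : ℂ, R < ‖z‖ → greenFn ω z - logPotential μ z = c := by
    intro z hz
    exact tendsto_nhds_unique (hA z hz) hac
  have hcval : c = -(logEnergy ω) := by
    have h1 : Tendsto (fun _ : ℕ => c) atTop (nhds (-(logEnergy ω))) :=
      hc.congr (fun m => hconst _ (habs m))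
    exact tendsto_nhds_unique tendsto_const_nhds h1
  refine ⟨hcval ▸ hac, ?_⟩
  intro z hz
  have h2 := hconst z hz
  rw [hcval] at h2
  simp only [greenFn] at h2
  linarith
end

section
/- Let Ω_r be an open set in ℂ and q a polynomial. Suppose |q(z)| > |a| + 1 for all z ∈ ∂Ω_r and all roots of q − a and q avoid ∂Ω_r. Then q and q − a have the same number of zeros (with multiplicity) in Ω_r, provided no connected component of q⁻¹(D(0, |a|+1)) meets ∂Ω_r. -/
open MeasureTheory Metric Filter Polynomial Topology Asymptotics
open scoped Classical ENNReal

private lemma aux_ofFn {α : Type*} (s : Multiset α) {n : ℕ} (h : Multiset.card s = n) :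
    ∃ f : Fin n → α, s = Multiset.map f Finset.univ.val := by
  obtain ⟨l, rfl⟩ : ∃ l : List α, s = ↑l := ⟨s.toList, (Multiset.coe_toList s).symm⟩
  rw [Multiset.coe_card] at h
  subst h
  refine ⟨l.get, ?_⟩
  rw [Fin.univ_val_map, List.ofFn_get]

private lemma aux_card_filter_map {ι α : Type*} [Fintype ι] (f : ι → α) (P : α → Prop)
    [DecidablePred P] :
    Multiset.card (Multiset.filter P (Multiset.map f Finset.univ.val))
      = (Finset.univ.filter fun i => P (f i)).card := by
  rw [Multiset.filter_map, Multiset.card_map]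
  rfl

private lemma aux_prod_map {ι : Type*} [Fintype ι] (f : ι → ℂ) (w : ℂ) :
    (Multiset.map (fun z => w - z) (Multiset.map f Finset.univ.val)).prod
      = ∏ i, (w - f i) := by
  rw [Multiset.map_map]
  rfl

theorem stmt_13 (Ωr : Set ℂ) (hΩ : IsOpen Ωr) (q : Polynomial ℂ) (a : ℂ)
    (hbig : ∀ z ∈ frontier Ωr, ‖a‖ + 1 < ‖q.eval z‖)
    (hq : ∀ z ∈ frontier Ωr, ¬ q.IsRoot z)
    (hqa : ∀ z ∈ frontier Ωr, ¬ (q - Polynomial.C a).IsRoot z)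
    (hcomp : ∀ z : ℂ, ‖q.eval z‖ < ‖a‖ + 1 →
      Disjoint (connectedComponentIn
          ((fun w => q.eval w) ⁻¹' ball (0:ℂ) (‖a‖ + 1)) z)
        (frontier Ωr)) :
    ((q.roots).filter (· ∈ Ωr)).card
      = (((q - Polynomial.C a).roots).filter (· ∈ Ωr)).card := by
  by_cases hn0 : q.natDegree = 0
  · obtain ⟨c, rfl⟩ := Polynomial.natDegree_eq_zero.mp hn0
    rw [← Polynomial.C_sub, Polynomial.roots_C, Polynomial.roots_C]
  set A := ‖a‖ with hA
  have hq0 : q ≠ 0 := fun h => hn0 (by simp [h])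
  set n := q.natDegree with hn
  have hnpos : 0 < n := Nat.pos_of_ne_zero hn0
  set c := q.leadingCoeff with hc
  have hc0 : c ≠ 0 := Polynomial.leadingCoeff_ne_zero.mpr hq0
  set p : ℝ → Polynomial ℂ := fun t => q - Polynomial.C ((t:ℂ) * a) with hp
  have hpdeg : ∀ t, (p t).natDegree = n := fun t => Polynomial.natDegree_sub_C
  have hplc : ∀ t, (p t).leadingCoeff = c := by
    intro t
    rw [Polynomial.leadingCoeff, hpdeg, hp]
    simp only [Polynomial.coeff_sub, Polynomial.coeff_C, if_neg hn0, sub_zero]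
    rfl
  have hcard : ∀ t, Multiset.card (p t).roots = n := by
    intro t
    rw [← hpdeg t]
    exact Polynomial.splits_iff_card_roots.mp (IsAlgClosed.splits _)
  have hrep : ∀ t, ∃ f : Fin n → ℂ, (p t).roots = Multiset.map f Finset.univ.val :=
    fun t => aux_ofFn _ (hcard t)
  choose rv hrv using hrep
  -- evaluation formula
  have heval : ∀ (t : ℝ) (w : ℂ), (p t).eval w = c * ∏ i, (w - rv t i) := by
    intro t w
    conv_lhs => rw [(IsAlgClosed.splits (p t)).eq_prod_roots]
    rw [Polynomial.eval_mul, Polynomial.eval_C, hplc, Polynomial.eval_multiset_prod,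
      Multiset.map_map, hrv t]
    have hfun : (eval w ∘ fun a => X - Polynomial.C a) = fun z : ℂ => w - z := by
      funext z; simp
    rw [hfun, aux_prod_map]
  -- roots avoid the frontier
  have habs : ∀ t ∈ Set.Icc (0:ℝ) 1, ∀ z : ℂ, (p t).eval z = 0 →
      ‖q.eval z‖ < A + 1 := by
    intro t ht z hz
    have hqz : q.eval z = (t:ℂ) * a := by
      rw [hp] at hz
      simp only [Polynomial.eval_sub, Polynomial.eval_C, sub_eq_zero] at hz
      exact hz
    rw [hqz]
    calc ‖(t:ℂ) * a‖ = |t| * A := by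
          rw [norm_mul, Complex.norm_real, Real.norm_eq_abs, hA]
      _ ≤ 1 * A := by
          apply mul_le_mul_of_nonneg_right _ (norm_nonneg a)
          rw [abs_of_nonneg ht.1]; exact ht.2
      _ = A := one_mul A
      _ < A + 1 := lt_add_one A
  have hfree : ∀ t ∈ Set.Icc (0:ℝ) 1, ∀ z : ℂ, (p t).eval z = 0 → z ∉ frontier Ωr := by
    intro t ht z hz hzf
    have h1 := habs t ht z hz
    have hmem : z ∈ (fun w => q.eval w) ⁻¹' ball (0:ℂ) (A + 1) := by
      simp only [Set.mem_preimage, mem_ball, Complex.dist_eq, sub_zero]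
      exact h1
    exact (hcomp z h1).ne_of_mem (mem_connectedComponentIn hmem) hzf rfl
  have hdichot : ∀ z : ℂ, z ∉ frontier Ωr → z ∈ Ωr ∨ z ∈ (closure Ωr)ᶜ := by
    intro z hz
    by_cases h : z ∈ closure Ωr
    · left
      by_contra h'
      exact hz ⟨h, by rwa [hΩ.interior_eq]⟩
    · right; exact h
  -- the counting function
  set g : ℝ → ℕ := fun t => Multiset.card (Multiset.filter (· ∈ Ωr) (p t).roots) with hg
  have hgcount : ∀ t, g t = (Finset.univ.filter fun i => rv t i ∈ Ωr).card := by
    intro t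
    rw [hg]
    simp only
    rw [hrv t, aux_card_filter_map]
  -- bound on the roots
  obtain ⟨R, hR⟩ : ∃ R : ℝ, ∀ z : ℂ, ‖q.eval z‖ ≤ A → ‖z‖ ≤ R := by
    have hdeg : 0 < q.degree := Polynomial.natDegree_pos_iff_degree_pos.mp hnpos
    have ht : Tendsto (fun z : ℂ => ‖q.eval z‖) (Bornology.cobounded ℂ) atTop :=
      q.tendsto_norm_atTop hdeg tendsto_norm_cobounded_atTop
    have hev : {z : ℂ | A < ‖q.eval z‖} ∈ Bornology.cobounded ℂ :=
      ht.eventually_gt_atTop A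
    have hb : Bornology.IsBounded {z : ℂ | A < ‖q.eval z‖}ᶜ := by
      rw [Bornology.isBounded_def, compl_compl]
      exact hev
    obtain ⟨r, hr⟩ := (isBounded_iff_subset_closedBall 0).mp hb
    refine ⟨r, fun z hz => ?_⟩
    have : z ∈ {z : ℂ | A < ‖q.eval z‖}ᶜ := by
      simp only [Set.mem_compl_iff, Set.mem_setOf_eq, not_lt]
      exact hz
    simpa [Complex.dist_eq, sub_zero] using hr this
  have hRnn : 0 ≤ max R 0 := le_max_right R 0
  -- main step: sequential local constancy of g on [0,1]
  have main : ∀ s : ℕ → ℝ, (∀ k, s k ∈ Set.Icc (0:ℝ) 1) → ∀ t₀ ∈ Set.Icc (0:ℝ) 1,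
      Tendsto s atTop (𝓝 t₀) → ∀ᶠ k in atTop, g (s k) = g t₀ := by
    intro s hs t₀ ht₀ hst
    by_contra hcon
    rw [Filter.not_eventually] at hcon
    obtain ⟨ψ, hψm, hψ⟩ := Filter.extraction_of_frequently_atTop hcon
    -- the root vectors are bounded
    have hrootval : ∀ (t : ℝ) (i : Fin n), (p t).eval (rv t i) = 0 := by
      intro t i
      apply Polynomial.isRoot_of_mem_roots
      rw [hrv t]
      exact Multiset.mem_map_of_mem _ (Finset.mem_univ i)
    have hbd : ∀ k, (fun i => rv (s (ψ k)) i) ∈ closedBall (0 : Fin n → ℂ) (max R 0) := by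
      intro k
      rw [mem_closedBall, dist_pi_le_iff hRnn]
      intro i
      rw [Pi.zero_apply, dist_zero_right]
      refine le_trans (hR _ ?_) (le_max_left R 0)
      have hz := hrootval (s (ψ k)) i
      have hqz : q.eval (rv (s (ψ k)) i) = ((s (ψ k) : ℝ) : ℂ) * a := by
        rw [hp] at hz
        simp only [Polynomial.eval_sub, Polynomial.eval_C, sub_eq_zero] at hz
        exact hz
      rw [hqz, norm_mul, Complex.norm_real, Real.norm_eq_abs]
      calc |s (ψ k)| * A ≤ 1 * A := by
            apply mul_le_mul_of_nonneg_right _ (norm_nonneg a)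
            rw [abs_of_nonneg (hs (ψ k)).1]; exact (hs (ψ k)).2
        _ = A := one_mul A
    obtain ⟨v, -, φ, hφm, hφlim⟩ :=
      tendsto_subseq_of_bounded isBounded_closedBall hbd
    set σ : ℕ → ℝ := fun k => s (ψ (φ k)) with hσ
    have hσt : Tendsto σ atTop (𝓝 t₀) := hst.comp (hψm.comp hφm).tendsto_atTop
    have hvi : ∀ i, Tendsto (fun k => rv (σ k) i) atTop (𝓝 (v i)) := by
      intro i
      exact ((continuous_apply i).tendsto v).comp hφlim
    -- identify the limit roots
    have hevalw : ∀ w : ℂ, (p t₀).eval w = c * ∏ i, (w - v i) := by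
      intro w
      have h1 : Tendsto (fun k => (p (σ k)).eval w) atTop (𝓝 ((p t₀).eval w)) := by
        have hef : ∀ t : ℝ, (p t).eval w = q.eval w - (t:ℂ) * a := by
          intro t; simp [hp]
        simp only [hef]
        exact tendsto_const_nhds.sub
          (((Complex.continuous_ofReal.tendsto t₀).comp hσt).mul_const a)
      have h2 : Tendsto (fun k => c * ∏ i, (w - rv (σ k) i)) atTop
          (𝓝 (c * ∏ i, (w - v i))) := by
        apply Tendsto.const_mul
        apply tendsto_finset_prod
        intro i _
        exact tendsto_const_nhds.sub (hvi i)
      exact tendsto_nhds_unique (h1.congr fun k => heval (σ k) w) h2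
    have hpoly : p t₀ = Polynomial.C c * ∏ i, (X - Polynomial.C (v i)) := by
      apply Polynomial.funext
      intro w
      rw [hevalw w]
      simp [Polynomial.eval_prod]
    have hroots0 : (p t₀).roots = Multiset.map v Finset.univ.val := by
      rw [hpoly, Polynomial.roots_C_mul _ hc0]
      have hh : (∏ i, (X - Polynomial.C (v i)))
          = (Multiset.map (fun z => X - Polynomial.C z)
              (Multiset.map v Finset.univ.val)).prod := by
        rw [Multiset.map_map]; rfl
      rw [hh, Polynomial.roots_multiset_prod_X_sub_C]
    have hg0 : g t₀ = (Finset.univ.filter fun i => v i ∈ Ωr).card := by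
      rw [hg]
      simp only
      rw [hroots0, aux_card_filter_map]
    -- each limit root stays on one side
    have hside : ∀ i : Fin n, ∀ᶠ k in atTop, (rv (σ k) i ∈ Ωr ↔ v i ∈ Ωr) := by
      intro i
      have hvroot : (p t₀).eval (v i) = 0 := by
        apply Polynomial.isRoot_of_mem_roots
        rw [hroots0]
        exact Multiset.mem_map_of_mem _ (Finset.mem_univ i)
      have hnf : v i ∉ frontier Ωr := hfree t₀ ht₀ _ hvroot
      rcases hdichot _ hnf with hin | hout
      · filter_upwards [hvi i (hΩ.mem_nhds hin)] with k hk
        simp only [Set.mem_preimage] at hk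
        simp [hk, hin]
      · have hop : IsOpen (closure Ωr)ᶜ := isClosed_closure.isOpen_compl
        filter_upwards [hvi i (hop.mem_nhds hout)] with k hk
        simp only [Set.mem_preimage] at hk
        have h1 : rv (σ k) i ∉ Ωr := fun h => hk (subset_closure h)
        have h2 : v i ∉ Ωr := fun h => hout (subset_closure h)
        simp [h1, h2]
    have hall : ∀ᶠ k in atTop, g (σ k) = g t₀ := by
      filter_upwards [eventually_all.mpr hside] with k hk
      rw [hgcount (σ k), hg0]
      congr 1
      apply Finset.filter_congr
      intro i _
      simp [hk i]
    obtain ⟨k, hk⟩ := hall.exists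
    exact hψ (φ k) hk
  -- conclude by connectedness of [0,1]
  have hG : Continuous fun t : Set.Icc (0:ℝ) 1 => g ↑t := by
    rw [continuous_iff_seqContinuous]
    intro x x₀ hx
    refine tendsto_nhds_of_eventually_eq ?_
    exact main (fun k => ↑(x k)) (fun k => (x k).2) ↑x₀ x₀.2
      ((continuous_subtype_val.tendsto x₀).comp hx)
  haveI hpre : PreconnectedSpace (Set.Icc (0:ℝ) 1) :=
    Subtype.preconnectedSpace isPreconnected_Icc
  have hclopen : IsClopen {t : Set.Icc (0:ℝ) 1 | g ↑t = g 0} := by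
    have hh : {t : Set.Icc (0:ℝ) 1 | g ↑t = g 0}
        = (fun t : Set.Icc (0:ℝ) 1 => g ↑t) ⁻¹' {g 0} := rfl
    rw [hh]
    exact (isClopen_discrete {g 0}).preimage hG
  have h00 : (0:ℝ) ∈ Set.Icc (0:ℝ) 1 := by norm_num
  have h01 : (1:ℝ) ∈ Set.Icc (0:ℝ) 1 := by norm_num
  have huniv := hclopen.eq_univ ⟨⟨0, h00⟩, rfl⟩
  have hfin : g 1 = g 0 := by
    have := huniv ▸ Set.mem_univ (⟨1, h01⟩ : Set.Icc (0:ℝ) 1)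
    exact this
  have hp0q : p 0 = q := by simp [hp]
  have hp1q : p 1 = q - Polynomial.C a := by simp [hp]
  have hL : ((q.roots).filter (· ∈ Ωr)).card = g 0 := by rw [hg]; simp only; rw [hp0q]
  have hRR : (((q - Polynomial.C a).roots).filter (· ∈ Ωr)).card = g 1 := by
    rw [hg]; simp only; rw [hp1q]
  rw [hL, hRR, hfin]
end
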